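/- Let Γ = ℤ^I ⊕ ℤ∂ with the form ⟨α + k∂, α' + k'∂⟩ = ⟨α, α'⟩_Q + k' n_* − k n'_*, where ⟨−,−⟩_Q is the Euler form of the star quiver Q_w of a tubular weight type and δ the minimal positive imaginary root of Q_w, with w the lcm of the weights. For classes e = α + d∂ and e' = α' + d'∂ with ranks r = n_* and r' = n'_*, degrees deg_X(e) = w·d + w·r + ⟨δ, α⟩_Q and slopes μ = deg_X/rank, one has w²⟨e, e'⟩ = w·r·r'·(μ(e') − μ(e)) + ⟨w·α − r·δ, w·α' − r'·δ⟩_Q. -/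

import Mathlib

/-- In the tubular Grothendieck lattice, with deg_X(α + d∂) = w·d + w·n_* + ⟨δ, α⟩_Q
and slope μ = deg_X / rank, the extended Euler form ⟨α+d∂, α'+d'∂⟩ = ⟨α,α'⟩_Q + d'·n_* − d·n'_*
satisfies w²⟨e, e'⟩ = w·r·r'·(μ(e') − μ(e)) + ⟨w·α − r·δ, w·α' − r'·δ⟩_Q. -/
theorem tubular_euler_slope_identity
    (I : Type*) [Fintype I]
    (EQ : (I → ℤ) →ₗ[ℤ] (I → ℤ) →ₗ[ℤ] ℤ)
    (star : I) (δ : I → ℤ) (w : ℤ)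
    (hδstar : δ star = w)
    (hrad : ∀ x, EQ δ x + EQ x δ = 0)
    (α α' : I → ℤ) (d d' : ℤ)
    (hr : α star ≠ 0) (hr' : α' star ≠ 0) :
    (w : ℚ) ^ 2 * (((EQ α α' : ℤ) : ℚ) + (d' : ℚ) * (α star : ℚ) - (d : ℚ) * (α' star : ℚ))
      = (w : ℚ) * (α star : ℚ) * (α' star : ℚ) *
          (((w * d' + w * α' star + EQ δ α' : ℤ) : ℚ) / (α' star : ℚ)
            - ((w * d + w * α star + EQ δ α : ℤ) : ℚ) / (α star : ℚ))
        + ((EQ (w • α - (α star) • δ) (w • α' - (α' star) • δ) : ℤ) : ℚ) := by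
  have h1 := hrad α'
  have h2 := hrad α
  have h3 := hrad δ
  have hexp : EQ (w • α - (α star) • δ) (w • α' - (α' star) • δ)
      = w * w * EQ α α' - w * (α' star) * EQ α δ - (α star) * w * EQ δ α'
        + (α star) * (α' star) * EQ δ δ := by
    simp only [map_sub, map_smul, LinearMap.sub_apply, LinearMap.smul_apply, smul_eq_mul]
    ring
  rw [hexp]
  have hxr : (α star : ℚ) ≠ 0 := Int.cast_ne_zero.mpr hr
  have hxr' : (α' star : ℚ) ≠ 0 := Int.cast_ne_zero.mpr hr'
  have h1' : ((EQ δ α' : ℤ) : ℚ) + ((EQ α' δ : ℤ) : ℚ) = 0 := by exact_mod_cast congrArg (Int.cast : ℤ → ℚ) h1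
  have h2' : ((EQ δ α : ℤ) : ℚ) + ((EQ α δ : ℤ) : ℚ) = 0 := by exact_mod_cast congrArg (Int.cast : ℤ → ℚ) h2
  have h3' : ((EQ δ δ : ℤ) : ℚ) = 0 := by
    have : (2:ℚ) * ((EQ δ δ : ℤ) : ℚ) = 0 := by
      have := congrArg (Int.cast : ℤ → ℚ) h3; push_cast at this; linarith
    linarith
  push_cast
  rw [h3']
  field_simp
  linear_combination ((w:ℚ) * ((α' star : ℤ):ℚ)) * h2'
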